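/- Let A be a finite-dimensional central simple algebra over a nonarchimedean local field K and D a maximal order in A. Then the stabilizer of D under the conjugation action of A* is a compact subgroup of A*/K*. -/

import Mathlib

/-- A nonarchimedean local field: a nontrivially normed field whose norm is
nonarchimedean and which is locally compact. -/
class NonarchLocalField (K : Type*) extends NontriviallyNormedField K where
  isNonarchimedean : IsNonarchimedean (norm : K → ℝ)
  locallyCompact : LocallyCompactSpace K

/-- `s` is a full `O`-lattice in the finite-dimensional `K`-algebra (or vector space) `A`:
it is contained in a finitely generated `O`-submodule and spans `A` over `K`. -/
def IsFullLattice (K : Type*) [Field K] {A : Type*} [Ring A] [Algebra K A]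
    (O : Subring K) (s : Set A) : Prop :=
  letI : Algebra O A := ((algebraMap K A).comp O.subtype).toAlgebra' (fun c x => Algebra.commutes (c : K) x)
  (∃ t : Finset A, s ⊆ (Submodule.span O (t : Set A) : Set A)) ∧
    Submodule.span K s = ⊤

/-- An `O`-order of maximal rank in `A`: a subring which is a full `O`-lattice
and is stable under multiplication by `O`. -/
def IsOrder (K : Type*) [Field K] {A : Type*} [Ring A] [Algebra K A]
    (O : Subring K) (D : Subring A) : Prop :=
  IsFullLattice K O (D : Set A) ∧ ∀ c ∈ O, ∀ x ∈ D, algebraMap K A c * x ∈ D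

/-- A maximal `O`-order in `A`. -/
def IsMaximalOrder (K : Type*) [Field K] {A : Type*} [Ring A] [Algebra K A]
    (O : Subring K) (D : Subring A) : Prop :=
  IsOrder K O D ∧ ∀ D' : Subring A, IsOrder K O D' → D ≤ D' → D = D'

/-- Let `A` be a finite-dimensional central simple algebra over a nonarchimedean
local field `K`, and `D` a maximal order in `A`. Then the stabilizer of `D` under
the conjugation action of `A*` is a compact subset (subgroup) of `A*/K*`. -/
theorem conjugation_stabilizer_compact
    (K : Type*) [NonarchLocalField K] (O : Subring K) (hO : ∀ x : K, x ∈ O ↔ ‖x‖ ≤ 1)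
    (A : Type*) [NormedRing A] [NormedAlgebra K A] [FiniteDimensional K A]
    [Algebra.IsCentral K A] [IsSimpleRing A]
    (D : Subring A) (hD : IsMaximalOrder K O D) :
    IsCompact (QuotientGroup.mk ''
      {x : Aˣ | ∀ a : A, a ∈ D ↔ (x : A) * a * ((x⁻¹ : Aˣ) : A) ∈ D} :
        Set (Aˣ ⧸ (Units.map (algebraMap K A).toMonoidHom).range)) := by
  classical
  haveI : LocallyCompactSpace K := NonarchLocalField.locallyCompact
  haveI : ProperSpace K := .of_locallyCompactSpace K
  haveI : ProperSpace A := FiniteDimensional.proper K A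
  letI instO : Algebra O A :=
    ((algebraMap K A).comp O.subtype).toAlgebra' (fun c x => Algebra.commutes (c : K) x)
  obtain ⟨⟨t, ht⟩, hspan⟩ :
      (∃ t : Finset A, (D : Set A) ⊆ (Submodule.span O (t : Set A) : Set A)) ∧
        Submodule.span K (D : Set A) = ⊤ := hD.1.1
  have hmulO : ∀ c ∈ O, ∀ x ∈ D, algebraMap K A c * x ∈ D := hD.1.2
  -- D is bounded
  set R : ℝ := ∑ a ∈ t, ‖a‖ with hR
  have hDbound : ∀ x ∈ D, ‖x‖ ≤ R := by
    intro x hx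
    obtain ⟨f, -, hf⟩ := Submodule.mem_span_finset.1 (ht hx)
    have hf' : ∑ i ∈ t, ((f i : K)) • i = x := by
      rw [← hf]; refine Finset.sum_congr rfl fun i _ => ?_; rw [Algebra.smul_def]; rfl
    calc ‖x‖ = ‖∑ i ∈ t, ((f i : K)) • i‖ := by rw [hf']
    _ ≤ ∑ i ∈ t, ‖((f i : K)) • i‖ := norm_sum_le _ _
    _ ≤ ∑ i ∈ t, ‖i‖ := by
        refine Finset.sum_le_sum fun i _ => ?_
        rw [norm_smul]
        have h1 : ‖((f i : K))‖ ≤ 1 := (hO _).1 (f i).2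
        have := norm_nonneg i
        nlinarith
  -- D contains an open neighborhood of 0, hence is open and closed
  obtain ⟨b, hbD, hbspan, hbli⟩ := exists_linearIndependent K ((D : Set A))
  rw [hspan] at hbspan
  haveI : Fintype b := (hbli.setFinite).fintype
  let bas : Module.Basis b K A := Module.Basis.mk hbli (by rw [Subtype.range_coe]; exact hbspan.ge)
  have hbas_apply : ∀ i : b, bas i = (i : A) := fun i => Module.Basis.mk_apply _ _ _
  have hecont : Continuous (bas.equivFun : A →ₗ[K] (b → K)) :=
    LinearMap.continuous_of_finiteDimensional _
  set U : Set A := (bas.equivFun : A →ₗ[K] (b → K)) ⁻¹' (Metric.ball 0 1) with hU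
  have hUopen : IsOpen U := (Metric.isOpen_ball).preimage hecont
  have hU0 : (0 : A) ∈ U := by
    simp [hU, map_zero]
  have hUD : U ⊆ (D : Set A) := by
    intro x hx
    have hxsum : ∑ i, bas.equivFun x i • bas i = x := bas.sum_equivFun x
    rw [← hxsum]
    refine Subring.sum_mem D fun i _ => ?_
    have hni : ‖bas.equivFun x i‖ ≤ 1 := by
      have h1 := hx
      rw [hU, Set.mem_preimage, mem_ball_zero_iff] at h1
      exact (norm_le_pi_norm _ i).trans h1.le
    have : bas.equivFun x i • bas i = algebraMap K A (bas.equivFun x i) * (i : A) := by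
      rw [Algebra.smul_def, hbas_apply]
    rw [this]
    exact hmulO _ ((hO _).2 hni) _ (hbD i.2)
  have hDclosed : IsClosed (D : Set A) := by
    rw [← isOpen_compl_iff]
    rw [isOpen_iff_mem_nhds]
    intro a ha
    have hnb : {z : A | z - a ∈ U} ∈ nhds a := by
      have : Continuous fun z : A => z - a := continuous_id.sub continuous_const
      have h0 : (fun z : A => z - a) a ∈ U := by simpa using hU0
      exact (hUopen.preimage this).mem_nhds h0
    refine Filter.mem_of_superset hnb ?_
    intro z hz hzD
    exact ha (by simpa using D.sub_mem hzD (hUD hz))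
  have hDcompact : IsCompact (D : Set A) := by
    refine Metric.isCompact_of_isClosed_isBounded hDclosed ?_
    refine (Metric.isBounded_closedBall (x := (0:A)) (r := R)).subset ?_
    intro x hx
    simpa [Metric.mem_closedBall, dist_zero_right] using hDbound x hx
  -- a scaling element
  obtain ⟨c, hc⟩ := NormedField.exists_one_lt_norm K
  have hc0 : c ≠ 0 := by
    intro h; rw [h, norm_zero] at hc; linarith
  -- the key compact set of pairs
  set S : Set (A × A) :=
    {p : A × A | p.1 * p.2 = 1} ∩ ({p | p.2 * p.1 = 1} ∩
      ((⋂ d ∈ (D : Set A), {p : A × A | p.1 * d * p.2 ∈ (D : Set A)}) ∩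
        ((⋂ d ∈ (D : Set A), {p : A × A | p.2 * d * p.1 ∈ (D : Set A)}) ∩
          ({p : A × A | 1 ≤ ‖p.1‖} ∩ {p : A × A | ‖p.1‖ ≤ ‖c‖})))) with hS
  have hSmem : ∀ p : A × A, p ∈ S ↔
      (p.1 * p.2 = 1 ∧ p.2 * p.1 = 1 ∧ (∀ d ∈ D, p.1 * d * p.2 ∈ D) ∧
        (∀ d ∈ D, p.2 * d * p.1 ∈ D) ∧ 1 ≤ ‖p.1‖ ∧ ‖p.1‖ ≤ ‖c‖) := by
    intro p
    simp only [hS, Set.mem_inter_iff, Set.mem_iInter, Set.mem_setOf_eq, SetLike.mem_coe]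
  have hSclosed : IsClosed S := by
    refine IsClosed.inter ?_ (IsClosed.inter ?_ (IsClosed.inter ?_ (IsClosed.inter ?_
      (IsClosed.inter ?_ ?_))))
    · exact isClosed_eq (continuous_fst.mul continuous_snd) continuous_const
    · exact isClosed_eq (continuous_snd.mul continuous_fst) continuous_const
    · exact isClosed_biInter fun d _ =>
        hDclosed.preimage ((continuous_fst.mul continuous_const).mul continuous_snd)
    · exact isClosed_biInter fun d _ =>
        hDclosed.preimage ((continuous_snd.mul continuous_const).mul continuous_fst)
    · exact isClosed_le continuous_const continuous_fst.norm
    · exact isClosed_le continuous_fst.norm continuous_const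
  -- uniform bound on the inverses of elements of S
  have hbound : ∃ C : ℝ, ∀ p ∈ S, ‖p.2‖ ≤ C := by
    by_contra hcon
    push_neg at hcon
    have hex : ∀ k : ℕ, ∃ p ∈ S, (k : ℝ) < ‖p.2‖ := fun k => by
      obtain ⟨p, hp, hlt⟩ := hcon (k : ℝ); exact ⟨p, hp, hlt⟩
    choose p hpS hpn using hex
    have h1 : ∀ k, (p k).1 ∈ Metric.closedBall (0 : A) ‖c‖ := fun k => by
      simpa [Metric.mem_closedBall, dist_zero_right] using ((hSmem _).1 (hpS k)).2.2.2.2.2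
    obtain ⟨y, -, φ, hφ, hconv⟩ := (isCompact_closedBall (0 : A) ‖c‖).tendsto_subseq h1
    have hy1 : (1 : ℝ) ≤ ‖y‖ := by
      have hn : Filter.Tendsto (fun k => ‖(p (φ k)).1‖) Filter.atTop (nhds ‖y‖) := hconv.norm
      exact ge_of_tendsto hn
        (Filter.Eventually.of_forall fun k => ((hSmem _).1 (hpS (φ k))).2.2.2.2.1)
    have hy0 : y ≠ 0 := fun h => by rw [h, norm_zero] at hy1; linarith
    -- in the limit, `D * y ⊆ y * D`
    have hyd : ∀ d ∈ D, ∃ e ∈ D, d * y = y * e := by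
      intro d hd
      have hk : ∀ k, (p (φ k)).2 * d * (p (φ k)).1 ∈ (D : Set A) := fun k =>
        ((hSmem _).1 (hpS (φ k))).2.2.2.1 d hd
      obtain ⟨e, he, ψ, hψ, hconv2⟩ := hDcompact.tendsto_subseq hk
      refine ⟨e, he, ?_⟩
      have l1 : Filter.Tendsto (fun k => d * (p (φ (ψ k))).1) Filter.atTop (nhds (d * y)) :=
        Filter.Tendsto.const_mul d (hconv.comp hψ.tendsto_atTop)
      have l2 : Filter.Tendsto
          (fun k => (p (φ (ψ k))).1 * ((p (φ (ψ k))).2 * d * (p (φ (ψ k))).1))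
          Filter.atTop (nhds (y * e)) :=
        (hconv.comp hψ.tendsto_atTop).mul hconv2
      have heq : ∀ k, d * (p (φ (ψ k))).1
          = (p (φ (ψ k))).1 * ((p (φ (ψ k))).2 * d * (p (φ (ψ k))).1) := by
        intro k
        have hab : (p (φ (ψ k))).1 * (p (φ (ψ k))).2 = 1 := ((hSmem _).1 (hpS _)).1
        calc d * (p (φ (ψ k))).1 = 1 * d * (p (φ (ψ k))).1 := by rw [one_mul]
        _ = (p (φ (ψ k))).1 * (p (φ (ψ k))).2 * d * (p (φ (ψ k))).1 := by rw [hab]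
        _ = (p (φ (ψ k))).1 * ((p (φ (ψ k))).2 * d * (p (φ (ψ k))).1) := by
            simp [mul_assoc]
      exact tendsto_nhds_unique ((Filter.tendsto_congr heq).1 l1) l2
    -- hence `A * y ⊆ y * A`
    have hAy : ∀ x : A, ∃ x', x * y = y * x' := by
      intro x
      have hx : x ∈ Submodule.span K (D : Set A) := by rw [hspan]; trivial
      refine Submodule.span_induction (p := fun z _ => ∃ x', z * y = y * x') ?_ ?_ ?_ ?_ hx
      · intro z hz; obtain ⟨e, -, he⟩ := hyd z hz; exact ⟨e, he⟩
      · exact ⟨0, by simp⟩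
      · rintro z w hz hw ⟨z', hz'⟩ ⟨w', hw'⟩
        exact ⟨z' + w', by rw [add_mul, hz', hw', mul_add]⟩
      · rintro r z hz ⟨z', hz'⟩
        exact ⟨r • z', by rw [smul_mul_assoc, hz', mul_smul_comm]⟩
    -- `y * A` is a nonzero two-sided ideal, so `y` is invertible
    let I : TwoSidedIdeal A := TwoSidedIdeal.mk' (Set.range fun z => y * z)
      ⟨0, by simp⟩
      (fun {v w} hv hw => by
        obtain ⟨a, rfl⟩ := hv; obtain ⟨b, rfl⟩ := hw; exact ⟨a + b, by simp [mul_add]⟩)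
      (fun {v} hv => by obtain ⟨a, rfl⟩ := hv; exact ⟨-a, by simp [mul_neg]⟩)
      (fun {v w} hw => by
        obtain ⟨a, rfl⟩ := hw
        obtain ⟨v', hv'⟩ := hAy v
        exact ⟨v' * a, by simp only []; rw [← mul_assoc, ← hv', mul_assoc]⟩)
      (fun {v w} hv => by obtain ⟨a, rfl⟩ := hv; exact ⟨a * w, by simp [mul_assoc]⟩)
    have hyI : y ∈ I := by
      exact (TwoSidedIdeal.mem_mk' _ _ _ _ _ _ _).2 ⟨1, by simp⟩
    have h1I : (1 : A) ∈ I := IsSimpleRing.one_mem_of_ne_zero_mem I hy0 hyI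
    replace h1I := (TwoSidedIdeal.mem_mk' _ _ _ _ _ _ _).1 h1I
    obtain ⟨binv, hbinv0⟩ := h1I
    have hbinv : y * binv = 1 := hbinv0
    have hsurj : Function.Surjective (LinearMap.mulLeft K y) := by
      intro z
      refine ⟨binv * z, ?_⟩
      simp only [LinearMap.mulLeft_apply]
      rw [← mul_assoc, hbinv, one_mul]
    have hinj : Function.Injective (LinearMap.mulLeft K y) :=
      LinearMap.injective_iff_surjective.2 hsurj
    have hby : binv * y = 1 := by
      apply hinj
      simp only [LinearMap.mulLeft_apply]
      rw [← mul_assoc, hbinv, one_mul, mul_one]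
    have hcont : ContinuousAt Ring.inverse ((⟨y, binv, hbinv, hby⟩ : Aˣ) : A) :=
      NormedRing.inverse_continuousAt (⟨y, binv, hbinv, hby⟩ : Aˣ)
    have htend : Filter.Tendsto (fun k => Ring.inverse ((p (φ k)).1)) Filter.atTop
        (nhds (Ring.inverse y)) := hcont.tendsto.comp hconv
    have hinveq : ∀ k, Ring.inverse ((p (φ k)).1) = (p (φ k)).2 := by
      intro k
      have h1' := ((hSmem _).1 (hpS (φ k))).1
      have h2' := ((hSmem _).1 (hpS (φ k))).2.1
      exact Ring.inverse_unit ⟨(p (φ k)).1, (p (φ k)).2, h1', h2'⟩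
    rw [Filter.tendsto_congr hinveq] at htend
    have hbnorm : Filter.Tendsto (fun k => ‖(p (φ k)).2‖) Filter.atTop
        (nhds ‖Ring.inverse y‖) := htend.norm
    obtain ⟨N, hN⟩ := Filter.eventually_atTop.1
      (hbnorm.eventually_lt_const (lt_add_one ‖Ring.inverse y‖))
    obtain ⟨m, hm⟩ := exists_nat_gt (‖Ring.inverse y‖ + 1)
    have hk1 := hN (max N m) (le_max_left _ _)
    have hk2 : ((max N m : ℕ) : ℝ) < ‖(p (φ (max N m))).2‖ :=
      lt_of_le_of_lt (Nat.cast_le.2 hφ.le_apply) (hpn (φ (max N m)))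
    have hk3 : ((m : ℕ) : ℝ) ≤ ((max N m : ℕ) : ℝ) := Nat.cast_le.2 (le_max_right _ _)
    linarith
  obtain ⟨C, hC⟩ := hbound
  have hScompact : IsCompact S := by
    refine Metric.isCompact_of_isClosed_isBounded hSclosed ?_
    have hsub : S ⊆ (Metric.closedBall (0:A) ‖c‖) ×ˢ (Metric.closedBall (0:A) C) := by
      intro q hq
      refine ⟨?_, ?_⟩
      · simpa [Metric.mem_closedBall, dist_zero_right] using ((hSmem q).1 hq).2.2.2.2.2
      · simpa [Metric.mem_closedBall, dist_zero_right] using hC q hq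
    exact (Bornology.IsBounded.prod Metric.isBounded_closedBall
      Metric.isBounded_closedBall).subset hsub
  -- transfer compactness to the unit group
  set N₁ : Set Aˣ := {x : Aˣ | (((x : A)), (((x⁻¹ : Aˣ) : A))) ∈ S} with hN₁
  have himg : Units.embedProduct A '' N₁ =
      (fun q : A × A => (q.1, MulOpposite.op q.2)) '' S := by
    ext q
    constructor
    · rintro ⟨x, hx, rfl⟩
      exact ⟨((x : A), ((x⁻¹ : Aˣ) : A)), hx, rfl⟩
    · rintro ⟨q, hq, rfl⟩
      have h1' := ((hSmem q).1 hq).1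
      have h2' := ((hSmem q).1 hq).2.1
      refine ⟨⟨q.1, q.2, h1', h2'⟩, ?_, rfl⟩
      exact hq
  have hN₁compact : IsCompact N₁ := by
    rw [Units.isEmbedding_embedProduct.toIsInducing.isCompact_iff, himg]
    exact hScompact.image
      (continuous_fst.prodMk (MulOpposite.continuous_op.comp continuous_snd))
  -- the two images agree
  have hmkc : Continuous (QuotientGroup.mk :
      Aˣ → Aˣ ⧸ (Units.map (algebraMap K A).toMonoidHom).range) := continuous_quot_mk
  have hcpos : (0:ℝ) < ‖c‖ := lt_trans one_pos hc
  have hEq : (QuotientGroup.mk ''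
      {x : Aˣ | ∀ a : A, a ∈ D ↔ (x : A) * a * ((x⁻¹ : Aˣ) : A) ∈ D} :
        Set (Aˣ ⧸ (Units.map (algebraMap K A).toMonoidHom).range))
      = QuotientGroup.mk '' N₁ := by
    apply Set.Subset.antisymm
    · rintro q ⟨x, hx, rfl⟩
      have hxne : ((x : A)) ≠ 0 := by
        intro h
        apply (one_ne_zero : (1:A) ≠ 0)
        rw [← x.mul_inv, h, zero_mul]
      have hxpos : 0 < ‖(x : A)‖ := norm_pos_iff.2 hxne
      obtain ⟨n, hn1, hn2⟩ := exists_mem_Ico_zpow hxpos hc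
      set cu : Kˣ := Units.mk0 c hc0 with hcu
      set u : Aˣ := Units.map (algebraMap K A).toMonoidHom (cu ^ (-n)) with hu2
      have hucoe : ((u : A)) = algebraMap K A (((cu ^ (-n) : Kˣ)) : K) := rfl
      have huinv : (((u⁻¹ : Aˣ)) : A) = algebraMap K A (((cu ^ n : Kˣ)) : K) := by
        have h' : (cu ^ (-n))⁻¹ = cu ^ n := by rw [zpow_neg, inv_inv]
        rw [hu2, ← map_inv, h']
        rfl
      have hswap : ∀ z : A, (↑u : A) * z = z * ↑u := by
        intro z; rw [hucoe]; exact Algebra.commutes _ _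
      have hswapinv : ∀ z : A, ((↑(u⁻¹) : A)) * z = z * ↑(u⁻¹) := by
        intro z; rw [huinv]; exact Algebra.commutes _ _
      refine ⟨u * x, ?_, ?_⟩
      · -- membership in N₁
        have coe1 : (((u * x : Aˣ)) : A) = (↑u : A) * ↑x := rfl
        have coe2 : ((((u * x)⁻¹ : Aˣ)) : A) = (↑(x⁻¹) : A) * ↑(u⁻¹) := by
          rw [mul_inv_rev]; rfl
        refine (hSmem _).2 ⟨Units.mul_inv (u*x), Units.inv_mul (u*x), ?_, ?_, ?_, ?_⟩
        · intro d hd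
          rw [coe1, coe2]
          have heq2 : (↑u : A) * ↑x * d * ((↑(x⁻¹) : A) * ↑(u⁻¹))
              = (↑x : A) * d * ↑(x⁻¹) := by
            calc (↑u : A) * ↑x * d * ((↑(x⁻¹) : A) * ↑(u⁻¹))
                = (↑u : A) * ((↑x : A) * d * ↑(x⁻¹)) * ↑(u⁻¹) := by
                  simp [mul_assoc]
            _ = ((↑x : A) * d * ↑(x⁻¹)) * ↑u * ↑(u⁻¹) := by rw [hswap]
            _ = (↑x : A) * d * ↑(x⁻¹) := by
                  rw [mul_assoc, Units.mul_inv, mul_one]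
          rw [heq2]
          exact (hx d).1 hd
        · intro d hd
          rw [coe1, coe2]
          have heq2 : (↑(x⁻¹) : A) * ↑(u⁻¹) * d * ((↑u : A) * ↑x)
              = (↑(x⁻¹) : A) * d * ↑x := by
            calc (↑(x⁻¹) : A) * ↑(u⁻¹) * d * ((↑u : A) * ↑x)
                = (↑(x⁻¹) : A) * (↑(u⁻¹) * d * ↑u) * ↑x := by simp [mul_assoc]
            _ = (↑(x⁻¹) : A) * (d * ↑(u⁻¹) * ↑u) * ↑x := by rw [hswapinv]
            _ = (↑(x⁻¹) : A) * d * ↑x := by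
                  rw [mul_assoc d, Units.inv_mul, mul_one, mul_assoc]
          rw [heq2]
          have hc2 : (↑x : A) * ((↑(x⁻¹) : A) * d * ↑x) * ↑(x⁻¹) = d := by
            simp [mul_assoc, Units.mul_inv_cancel_left, Units.mul_inv]
          exact (hx _).2 (by rw [hc2]; exact hd)
        · -- lower norm bound
          have coe1 : (((u * x : Aˣ)) : A) = (↑u : A) * ↑x := rfl
          rw [coe1, hucoe, ← Algebra.smul_def, norm_smul]
          have hval : ((((cu ^ (-n) : Kˣ)) : K)) = c ^ (-n) := by
            rw [Units.val_zpow_eq_zpow_val]; rfl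
          rw [hval, norm_zpow]
          have hone : ‖c‖ ^ (-n) * ‖c‖ ^ n = 1 := by
            rw [← zpow_add₀ (ne_of_gt hcpos), neg_add_cancel, zpow_zero]
          calc (1:ℝ) = ‖c‖ ^ (-n) * ‖c‖ ^ n := hone.symm
          _ ≤ ‖c‖ ^ (-n) * ‖(x : A)‖ :=
              mul_le_mul_of_nonneg_left hn1 (zpow_pos hcpos (-n)).le
        · -- upper norm bound
          have coe1 : (((u * x : Aˣ)) : A) = (↑u : A) * ↑x := rfl
          rw [coe1, hucoe, ← Algebra.smul_def, norm_smul]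
          have hval : ((((cu ^ (-n) : Kˣ)) : K)) = c ^ (-n) := by
            rw [Units.val_zpow_eq_zpow_val]; rfl
          rw [hval, norm_zpow]
          have hcc : ‖c‖ ^ (-n) * ‖c‖ ^ (n + 1) = ‖c‖ := by
            rw [← zpow_add₀ (ne_of_gt hcpos)]
            have : -n + (n + 1) = 1 := by ring
            rw [this, zpow_one]
          calc ‖c‖ ^ (-n) * ‖(x : A)‖ ≤ ‖c‖ ^ (-n) * ‖c‖ ^ (n + 1) :=
              mul_le_mul_of_nonneg_left hn2.le (zpow_pos hcpos (-n)).le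
          _ = ‖c‖ := hcc
      · -- same class in the quotient
        rw [QuotientGroup.eq]
        have hinvmul : (u * x)⁻¹ * x = u⁻¹ := by
          rw [mul_inv_rev]
          ext
          push_cast
          calc (↑(x⁻¹) : A) * ↑(u⁻¹) * ↑x = (↑(x⁻¹) : A) * (↑x * ↑(u⁻¹)) := by
                rw [mul_assoc, hswapinv]
          _ = ↑(u⁻¹) := by rw [Units.inv_mul_cancel_left]
        rw [hinvmul]
        exact ⟨(cu ^ (-n))⁻¹, by rw [map_inv, ← hu2]⟩
    · rintro q ⟨x, hx, rfl⟩
      refine ⟨x, ?_, rfl⟩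
      intro a
      have hmem := (hSmem _).1 hx
      constructor
      · intro ha; exact hmem.2.2.1 a ha
      · intro ha
        have h4 := hmem.2.2.2.1 _ ha
        simpa [mul_assoc, Units.inv_mul_cancel_left, Units.inv_mul] using h4
  rw [hEq]
  exact hN₁compact.image hmkc
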